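/- Let X be a Banach space, 1 ≤ q < ∞, N > 1, and let (b_k)_{k≥1} be positive reals with b_k ≥ N·b_{k−1} for all k ≥ 2. Then for every f ∈ L¹(Ω; X), μ-almost everywhere on Ω: ∫₀^∞ ‖Σ_{k≥1} t b_k e^{−t b_k} dE_{k+1}(f)‖_X^q dt/t ≤ (N/(N−1))^{q−1} · Σ_{k≥1} ‖dE_{k+1}(f)‖_X^q. -/

import Mathlib

open MeasureTheory Filter Set Topology ENNReal

/-- `E_n(f)`: `X`-valued conditional expectation of `f` given `𝒜_n` for `n ≥ 1`, with
`E_0 = 0`. -/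
noncomputable def condEv {Ω : Type*} {X : Type*} [NormedAddCommGroup X] [NormedSpace ℝ X]
    [CompleteSpace X] [m0 : MeasurableSpace Ω] (μ : Measure Ω)
    (F : ℕ → MeasurableSpace Ω) (f : Ω → X) (n : ℕ) : Ω → X :=
  if n = 0 then 0 else μ[f | F n]

/-- The `X`-valued martingale difference `dE_n(f) = E_n(f) - E_{n-1}(f)`. -/
noncomputable def dEv {Ω : Type*} {X : Type*} [NormedAddCommGroup X] [NormedSpace ℝ X]
    [CompleteSpace X] [m0 : MeasurableSpace Ω] (μ : Measure Ω)
    (F : ℕ → MeasurableSpace Ω) (f : Ω → X) (n : ℕ) : Ω → X :=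
  fun ω => condEv μ F f n ω - condEv μ F f (n - 1) ω

/-- Weighted Hölder inequality for `tsum` over `ℕ` in `ℝ≥0∞`. -/
lemma ennreal_weighted_holder_tsum {p : ℝ} (hp : 1 ≤ p) (w f : ℕ → ℝ≥0∞) :
    ∑' i, w i * f i ≤ (∑' i, w i) ^ (1 - p⁻¹) * (∑' i, w i * f i ^ p) ^ p⁻¹ := by
  have hp0 : (0:ℝ) < p := lt_of_lt_of_le one_pos hp
  have h1 : (0:ℝ) ≤ 1 - p⁻¹ := by
    have : p⁻¹ ≤ 1 := inv_le_one_of_one_le₀ hp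
    linarith
  have h2 : (0:ℝ) ≤ p⁻¹ := by positivity
  rw [ENNReal.tsum_eq_iSup_sum (f := fun i => w i * f i)]
  refine iSup_le fun s => ?_
  calc ∑ i ∈ s, w i * f i
      ≤ (∑ i ∈ s, w i) ^ (1 - p⁻¹) * (∑ i ∈ s, w i * f i ^ p) ^ p⁻¹ :=
        ENNReal.inner_le_weight_mul_Lp_of_nonneg s hp w f
    _ ≤ (∑' i, w i) ^ (1 - p⁻¹) * (∑' i, w i * f i ^ p) ^ p⁻¹ := by
        gcongr <;> exact ENNReal.sum_le_tsum s

/-- Weighted power-mean (Jensen-type) inequality in `ℝ≥0∞`. -/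
lemma ennreal_weighted_jensen {p : ℝ} (hp : 1 ≤ p) (w f : ℕ → ℝ≥0∞) {c : ℝ≥0∞}
    (hW : ∑' i, w i ≤ c) :
    (∑' i, w i * f i) ^ p ≤ c ^ (p - 1) * ∑' i, w i * f i ^ p := by
  have hp0 : (0:ℝ) < p := lt_of_lt_of_le one_pos hp
  calc (∑' i, w i * f i) ^ p
      ≤ ((∑' i, w i) ^ (1 - p⁻¹) * (∑' i, w i * f i ^ p) ^ p⁻¹) ^ p :=
        ENNReal.rpow_le_rpow (ennreal_weighted_holder_tsum hp w f) hp0.le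
    _ = (∑' i, w i) ^ (p - 1) * (∑' i, w i * f i ^ p) := by
        rw [ENNReal.mul_rpow_of_nonneg _ _ hp0.le, ← ENNReal.rpow_mul, ← ENNReal.rpow_mul]
        have e1 : (1 - p⁻¹) * p = p - 1 := by field_simp
        have e2 : p⁻¹ * p = 1 := inv_mul_cancel₀ hp0.ne'
        rw [e1, e2, ENNReal.rpow_one]
    _ ≤ c ^ (p - 1) * (∑' i, w i * f i ^ p) :=
        mul_le_mul' (ENNReal.rpow_le_rpow hW (by linarith)) le_rfl

/-- Summability and bound for the weights `s k * exp (-(s k))` when `s` grows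
geometrically with ratio at least `N`. -/
lemma weight_sum_bound {N : ℝ} (hN : 1 < N) (s : ℕ → ℝ) (hs0 : 0 < s 0)
    (hgrow : ∀ k, N * s k ≤ s (k + 1)) :
    Summable (fun k => s k * Real.exp (-(s k))) ∧
      ∑' k, s k * Real.exp (-(s k)) ≤ N / (N - 1) := by
  set c := N / (N - 1) with hc
  have hN1 : (0:ℝ) < N - 1 := by linarith
  have hc1 : 1 ≤ c := by
    rw [hc, le_div_iff₀ hN1]; linarith
  have hc0 : 0 < c := lt_of_lt_of_le one_pos hc1
  have hspos : ∀ k, 0 < s k := by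
    intro k; induction k with
    | zero => exact hs0
    | succ n ih => exact lt_of_lt_of_le (by nlinarith) (hgrow n)
  -- the "previous" sequence
  set sH : ℕ → ℝ := fun k => Nat.rec 0 (fun n _ => s n) k with hsH
  have hsH0 : sH 0 = 0 := rfl
  have hsHsucc : ∀ k, sH (k + 1) = s k := fun k => rfl
  have hsHle : ∀ k, sH k ≤ s k := by
    intro k
    cases k with
    | zero => exact hs0.le
    | succ n =>
      rw [hsHsucc]
      nlinarith [hgrow n, hspos n]
  set E : ℕ → ℝ := fun k => Real.exp (-(sH k)) with hE
  have hE0 : E 0 = 1 := by simp [hE, hsH0]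
  have hEsucc : ∀ k, E (k + 1) = Real.exp (-(s k)) := by
    intro k; simp [hE, hsHsucc]
  -- the key comparison
  have hkey : ∀ k, s k * Real.exp (-(s k)) ≤ c * (E k - E (k + 1)) := by
    intro k
    have hsk : s k ≤ c * (s k - sH k) := by
      cases k with
      | zero => rw [hsH0]; nlinarith [hspos 0]
      | succ n =>
        rw [hsHsucc, hc, div_mul_eq_mul_div, le_div_iff₀ hN1]
        nlinarith [hgrow n]
    have h2 : (s k - sH k) * Real.exp (-(s k)) ≤ E k - E (k + 1) := by
      rw [hEsucc, hE]
      have hexp := Real.add_one_le_exp (s k - sH k)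
      have hmul := mul_le_mul_of_nonneg_right hexp (Real.exp_pos (-(s k))).le
      have heq : Real.exp (s k - sH k) * Real.exp (-(s k)) = Real.exp (-(sH k)) := by
        rw [← Real.exp_add]; ring_nf
      nlinarith [Real.exp_pos (-(s k))]
    calc s k * Real.exp (-(s k)) ≤ (c * (s k - sH k)) * Real.exp (-(s k)) :=
          mul_le_mul_of_nonneg_right hsk (Real.exp_pos _).le
      _ = c * ((s k - sH k) * Real.exp (-(s k))) := by ring
      _ ≤ c * (E k - E (k + 1)) := mul_le_mul_of_nonneg_left h2 hc0.le
  have hgnn : ∀ k, 0 ≤ E k - E (k + 1) := by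
    intro k
    refine sub_nonneg.2 ?_
    rw [hEsucc k]
    exact Real.exp_le_exp.2 (neg_le_neg (hsHle k))
  have hgsum : ∀ n, ∑ k ∈ Finset.range n, (E k - E (k + 1)) ≤ 1 := by
    intro n
    rw [Finset.sum_range_sub' E n, hE0]
    have : 0 ≤ E n := (Real.exp_pos _).le
    linarith
  have hsummg : Summable fun k => E k - E (k + 1) := summable_of_sum_range_le hgnn hgsum
  have htsumg : ∑' k, (E k - E (k + 1)) ≤ 1 := Real.tsum_le_of_sum_range_le hgnn hgsum
  have hwnn : ∀ k, 0 ≤ s k * Real.exp (-(s k)) :=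
    fun k => mul_nonneg (hspos k).le (Real.exp_pos _).le
  have hsummw : Summable fun k => s k * Real.exp (-(s k)) :=
    Summable.of_nonneg_of_le hwnn hkey (hsummg.mul_left c)
  refine ⟨hsummw, ?_⟩
  calc ∑' k, s k * Real.exp (-(s k)) ≤ ∑' k, c * (E k - E (k + 1)) :=
        Summable.tsum_le_tsum hkey hsummw (hsummg.mul_left c)
    _ = c * ∑' k, (E k - E (k + 1)) := tsum_mul_left
    _ ≤ c * 1 := mul_le_mul_of_nonneg_left htsumg hc0.le
    _ = c := mul_one c

/-- The exponential integral `∫₀^∞ r e^{-tr} dt = 1`. -/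
lemma lintegral_exp_weight {r : ℝ} (hr : 0 < r) :
    ∫⁻ t in Ioi (0:ℝ), ENNReal.ofReal (r * Real.exp (-(t * r))) = 1 := by
  calc ∫⁻ t in Ioi (0:ℝ), ENNReal.ofReal (r * Real.exp (-(t * r)))
      = ∫⁻ t in Ioi (0:ℝ), ProbabilityTheory.exponentialPDF r t := by
        refine setLIntegral_congr_fun measurableSet_Ioi (fun t ht => ?_)
        rw [ProbabilityTheory.exponentialPDF_of_nonneg (le_of_lt ht), mul_comm t r]
    _ = ∫⁻ t in Ici (0:ℝ), ProbabilityTheory.exponentialPDF r t := by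
        rw [Measure.restrict_congr_set Ioi_ae_eq_Ici]
    _ = ∫⁻ t, ProbabilityTheory.exponentialPDF r t := by
        rw [← lintegral_add_compl (μ := volume)
          (fun t => ProbabilityTheory.exponentialPDF r t) measurableSet_Ici, compl_Ici,
          ProbabilityTheory.lintegral_exponentialPDF_of_nonpos le_rfl, add_zero]
    _ = 1 := ProbabilityTheory.lintegral_exponentialPDF_eq_one hr

/-- For a Banach space `X`, `1 ≤ q < ∞`, `N > 1`, and positive reals `(b_k)` with
`b_k ≥ N b_{k-1}` for `k ≥ 2`: for every `f ∈ L¹(Ω; X)`, `μ`-a.e. on `Ω`,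
`∫₀^∞ ‖Σ_{k≥1} t b_k e^{-t b_k} dE_{k+1}(f)‖^q dt/t ≤ (N/(N-1))^{q-1} Σ_{k≥1} ‖dE_{k+1}(f)‖^q`. -/
theorem stmt16 {Ω : Type*} {X : Type*} [NormedAddCommGroup X] [NormedSpace ℝ X]
    [CompleteSpace X] [m0 : MeasurableSpace Ω] (μ : Measure Ω) [IsProbabilityMeasure μ]
    (F : ℕ → MeasurableSpace Ω) (hle : ∀ n, F n ≤ m0) (hmono : Monotone F)
    (q : ℝ) (hq : 1 ≤ q) (N : ℝ) (hN : 1 < N)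
    (b : ℕ → ℝ) (hb : ∀ k, 1 ≤ k → 0 < b k)
    (hgrow : ∀ k, 2 ≤ k → N * b (k - 1) ≤ b k)
    (f : Ω → X) (hf : Integrable f μ) :
    ∀ᵐ ω ∂μ,
      (∫⁻ t in Ioi (0 : ℝ), ENNReal.ofReal
          (‖∑' k : ℕ, (t * b (k + 1) * Real.exp (-(t * b (k + 1)))) •
            dEv μ F f (k + 2) ω‖ ^ q / t)) ≤
        ENNReal.ofReal ((N / (N - 1)) ^ (q - 1)) *
          ∑' k : ℕ, ENNReal.ofReal (‖dEv μ F f (k + 2) ω‖ ^ q) := by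
  have hq0 : (0:ℝ) < q := lt_of_lt_of_le one_pos hq
  set c := N / (N - 1) with hc
  have hN1 : (0:ℝ) < N - 1 := by linarith
  have hc0 : 0 < c := div_pos (by linarith) hN1
  refine Filter.Eventually.of_forall fun ω => ?_
  set v : ℕ → X := fun k => dEv μ F f (k + 2) ω with hv
  by_cases hS : (∑' k : ℕ, ENNReal.ofReal (‖v k‖ ^ q)) = ⊤
  · rw [hS, ENNReal.mul_top (by
      simp only [ne_eq, ENNReal.ofReal_eq_zero, not_le]
      exact Real.rpow_pos_of_pos hc0 _)]
    exact le_top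
  -- the finite case
  have hvq_nn : ∀ k, (0:ℝ) ≤ ‖v k‖ ^ q := fun k => Real.rpow_nonneg (norm_nonneg _) q
  have hsumq : Summable fun k => ‖v k‖ ^ q := by
    have h1 := ENNReal.summable_toReal hS
    simpa [ENNReal.toReal_ofReal, hvq_nn] using h1
  set M : ℝ := (∑' k, ‖v k‖ ^ q) ^ q⁻¹ with hM
  have hMv : ∀ k, ‖v k‖ ≤ M := by
    intro k
    have h1 : ‖v k‖ ^ q ≤ ∑' k, ‖v k‖ ^ q := Summable.le_tsum hsumq k fun j _ => hvq_nn j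
    have h2 := Real.rpow_le_rpow (hvq_nn k) h1 (inv_nonneg.2 hq0.le)
    rwa [Real.rpow_rpow_inv (norm_nonneg _) hq0.ne'] at h2
  -- pointwise bound in t
  have key : ∀ t ∈ Ioi (0:ℝ),
      ENNReal.ofReal (‖∑' k : ℕ, (t * b (k + 1) * Real.exp (-(t * b (k + 1)))) • v k‖ ^ q / t) ≤
        ENNReal.ofReal (c ^ (q - 1)) *
          ∑' k : ℕ, ENNReal.ofReal (b (k + 1) * Real.exp (-(t * b (k + 1))) * ‖v k‖ ^ q) := by
    intro t ht
    rw [mem_Ioi] at ht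
    set s : ℕ → ℝ := fun k => t * b (k + 1) with hs
    have hs0 : 0 < s 0 := mul_pos ht (hb 1 le_rfl)
    have hsgrow : ∀ k, N * s k ≤ s (k + 1) := by
      intro k
      have h1 : N * b (k + 1) ≤ b (k + 2) := by
        have := hgrow (k + 2) (by omega)
        simpa using this
      have := mul_le_mul_of_nonneg_left h1 ht.le
      calc N * s k = t * (N * b (k + 1)) := by rw [hs]; ring
        _ ≤ t * b (k + 2) := this
        _ = s (k + 1) := rfl
    obtain ⟨hWsum, hWle⟩ := weight_sum_bound hN s hs0 hsgrow
    set w : ℕ → ℝ := fun k => s k * Real.exp (-(s k)) with hw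
    have hspos : ∀ k, 0 < s k := by
      intro k; exact mul_pos ht (hb (k + 1) (by omega))
    have hwnn : ∀ k, 0 ≤ w k := fun k => mul_nonneg (hspos k).le (Real.exp_pos _).le
    have hwv_sum : Summable fun k => w k * ‖v k‖ := by
      refine Summable.of_nonneg_of_le (fun k => mul_nonneg (hwnn k) (norm_nonneg _))
        (fun k => ?_) (hWsum.mul_right M)
      exact mul_le_mul_of_nonneg_left (hMv k) (hwnn k)
    have hvsum : Summable fun k => w k • v k := by
      refine Summable.of_norm ?_
      refine hwv_sum.congr fun k => ?_
      rw [norm_smul, Real.norm_eq_abs, abs_of_nonneg (hwnn k)]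
    have hT : ‖∑' k, w k • v k‖ ≤ ∑' k, w k * ‖v k‖ := by
      refine le_trans (norm_tsum_le_tsum_norm ?_) (le_of_eq (tsum_congr fun k => ?_))
      · refine hwv_sum.congr fun k => ?_
        rw [norm_smul, Real.norm_eq_abs, abs_of_nonneg (hwnn k)]
      · rw [norm_smul, Real.norm_eq_abs, abs_of_nonneg (hwnn k)]
    have hwvE : ENNReal.ofReal (∑' k, w k * ‖v k‖) =
        ∑' k, ENNReal.ofReal (w k) * ENNReal.ofReal ‖v k‖ := by
      rw [ENNReal.ofReal_tsum_of_nonneg (fun k => mul_nonneg (hwnn k) (norm_nonneg _)) hwv_sum]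
      exact tsum_congr fun k => ENNReal.ofReal_mul (hwnn k)
    have hWE : (∑' k, ENNReal.ofReal (w k)) ≤ ENNReal.ofReal c := by
      rw [← ENNReal.ofReal_tsum_of_nonneg hwnn hWsum]
      exact ENNReal.ofReal_le_ofReal hWle
    calc ENNReal.ofReal (‖∑' k, w k • v k‖ ^ q / t)
        = (ENNReal.ofReal ‖∑' k, w k • v k‖) ^ q / ENNReal.ofReal t := by
          rw [ENNReal.ofReal_div_of_pos ht, ENNReal.ofReal_rpow_of_nonneg (norm_nonneg _) hq0.le]
      _ ≤ (∑' k, ENNReal.ofReal (w k) * ENNReal.ofReal ‖v k‖) ^ q / ENNReal.ofReal t := by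
          gcongr
          rw [← hwvE]
          exact ENNReal.ofReal_le_ofReal hT
      _ ≤ ((ENNReal.ofReal c) ^ (q - 1) *
            ∑' k, ENNReal.ofReal (w k) * (ENNReal.ofReal ‖v k‖) ^ q) / ENNReal.ofReal t := by
          gcongr
          exact ennreal_weighted_jensen hq _ _ hWE
      _ = ENNReal.ofReal (c ^ (q - 1)) *
            ∑' k : ℕ, ENNReal.ofReal (b (k + 1) * Real.exp (-(t * b (k + 1))) * ‖v k‖ ^ q) := by
          rw [ENNReal.ofReal_rpow_of_pos hc0, mul_div_assoc]
          congr 1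
          rw [ENNReal.div_eq_inv_mul, ← ENNReal.tsum_mul_left]
          refine tsum_congr fun k => ?_
          rw [ENNReal.ofReal_rpow_of_nonneg (norm_nonneg _) hq0.le,
            ← ENNReal.ofReal_mul (hwnn k), ← ENNReal.div_eq_inv_mul,
            ← ENNReal.ofReal_div_of_pos ht]
          congr 1
          rw [hw, hs]
          field_simp
  -- measurability of the majorant
  have hmeasg : Measurable fun t : ℝ => ENNReal.ofReal (c ^ (q - 1)) *
      ∑' k : ℕ, ENNReal.ofReal (b (k + 1) * Real.exp (-(t * b (k + 1))) * ‖v k‖ ^ q) := by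
    refine Measurable.const_mul (Measurable.ennreal_tsum fun k => ?_) _
    refine Measurable.ennreal_ofReal ?_
    fun_prop
  calc (∫⁻ t in Ioi (0:ℝ), ENNReal.ofReal
        (‖∑' k : ℕ, (t * b (k + 1) * Real.exp (-(t * b (k + 1)))) • v k‖ ^ q / t))
      ≤ ∫⁻ t in Ioi (0:ℝ), ENNReal.ofReal (c ^ (q - 1)) *
          ∑' k : ℕ, ENNReal.ofReal (b (k + 1) * Real.exp (-(t * b (k + 1))) * ‖v k‖ ^ q) :=
        setLIntegral_mono hmeasg key
    _ = ENNReal.ofReal (c ^ (q - 1)) * ∫⁻ t in Ioi (0:ℝ),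
          ∑' k : ℕ, ENNReal.ofReal (b (k + 1) * Real.exp (-(t * b (k + 1))) * ‖v k‖ ^ q) :=
        lintegral_const_mul' _ _ ENNReal.ofReal_ne_top
    _ = ENNReal.ofReal (c ^ (q - 1)) * ∑' k : ℕ, ∫⁻ t in Ioi (0:ℝ),
          ENNReal.ofReal (b (k + 1) * Real.exp (-(t * b (k + 1))) * ‖v k‖ ^ q) := by
        rw [lintegral_tsum fun k => (Measurable.ennreal_ofReal (by fun_prop)).aemeasurable]
    _ = ENNReal.ofReal (c ^ (q - 1)) * ∑' k : ℕ, ENNReal.ofReal (‖v k‖ ^ q) := by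
        congr 1
        refine tsum_congr fun k => ?_
        have hbk : 0 < b (k + 1) := hb (k + 1) (by omega)
        calc ∫⁻ t in Ioi (0:ℝ),
              ENNReal.ofReal (b (k + 1) * Real.exp (-(t * b (k + 1))) * ‖v k‖ ^ q)
            = ∫⁻ t in Ioi (0:ℝ), ENNReal.ofReal (‖v k‖ ^ q) *
                ENNReal.ofReal (b (k + 1) * Real.exp (-(t * b (k + 1)))) := by
              refine lintegral_congr fun t => ?_
              rw [← ENNReal.ofReal_mul (hvq_nn k)]
              congr 1
              ring
          _ = ENNReal.ofReal (‖v k‖ ^ q) * ∫⁻ t in Ioi (0:ℝ),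
                ENNReal.ofReal (b (k + 1) * Real.exp (-(t * b (k + 1)))) :=
              lintegral_const_mul' _ _ ENNReal.ofReal_ne_top
          _ = ENNReal.ofReal (‖v k‖ ^ q) := by
              rw [lintegral_exp_weight hbk, mul_one]
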